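/- arXiv:2507.03900 — 4 statements merged into one kernel-verified Lean document; each statement's English description precedes it below -/
import Mathlib

section
/- Let (Ω, ℙ) be a probability space and Z : Ω → ℝ an integrable random variable. Define g : ℝ → ℝ by g q := E[min (Z − q, 0)]. Then for every q₀ ∈ ℝ, g has derivative −ℙ({ω | Z ω ≤ q₀}).toReal within [q₀, ∞) at q₀ (right derivative) and derivative −ℙ({ω | Z ω < q₀}).toReal within (−∞, q₀] at q₀ (left derivative). -/
open MeasureTheory Filter Set Topology

private lemma min_zero_eq' (a : ℝ) : min a 0 = (a - |a|)/2 := by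
  rcases le_total a 0 with h | h
  · rw [min_eq_left h, abs_of_nonpos h]; ring
  · rw [min_eq_right h, abs_of_nonneg h]; ring

private lemma abs_min0 (a b : ℝ) : |min a 0 - min b 0| ≤ |a - b| := by
  rw [min_zero_eq', min_zero_eq']
  have h1 : (a - |a|)/2 - (b - |b|)/2 = ((a - b) - (|a| - |b|))/2 := by ring
  rw [h1, abs_div, abs_two]
  have h2 : |(a - b) - (|a| - |b|)| ≤ |a - b| + abs (|a| - |b|) := abs_sub _ _
  have h3 : abs (|a| - |b|) ≤ |a - b| := abs_abs_sub_abs_le_abs_sub a b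
  linarith

private lemma aux_deriv {Ω : Type*} [MeasurableSpace Ω] (P : Measure Ω) [IsProbabilityMeasure P]
    (Z : Ω → ℝ) (hZm : Measurable Z) (hZ : Integrable Z P) (q₀ : ℝ)
    (s : Set ℝ) (A : Set Ω) (hA : MeasurableSet A)
    (hpt : ∀ ω, Tendsto (fun q => (min (Z ω - q) 0 - min (Z ω - q₀) 0)/(q - q₀))
      (𝓝[s \ {q₀}] q₀) (𝓝 (- A.indicator 1 ω))) :
    HasDerivWithinAt (fun q : ℝ => ∫ ω, min (Z ω - q) 0 ∂P) (-(P A).toReal) s q₀ := by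
  have hint : ∀ q : ℝ, Integrable (fun ω => min (Z ω - q) 0) P := by
    intro q
    refine (hZ.sub (integrable_const q)).mono
      ((hZm.sub measurable_const).min measurable_const).aestronglyMeasurable
      (Eventually.of_forall fun ω => ?_)
    simp only [Real.norm_eq_abs]
    calc |min (Z ω - q) 0| = |min (Z ω - q) 0 - min 0 0| := by simp
      _ ≤ |(Z ω - q) - 0| := abs_min0 _ _
      _ = |Z ω - q| := by simp
  rw [hasDerivWithinAt_iff_tendsto_slope]
  have hval : ∫ ω, - A.indicator 1 ω ∂P = -(P A).toReal := by
    rw [integral_neg, integral_indicator_one hA]; rfl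
  have key : Tendsto (fun q : ℝ => ∫ ω, (min (Z ω - q) 0 - min (Z ω - q₀) 0)/(q - q₀) ∂P)
      (𝓝[s \ {q₀}] q₀) (𝓝 (∫ ω, - A.indicator 1 ω ∂P)) := by
    apply tendsto_integral_filter_of_dominated_convergence (fun _ => (1 : ℝ))
    · exact Eventually.of_forall fun q =>
        ((((hZm.sub measurable_const).min measurable_const).sub
          ((hZm.sub measurable_const).min measurable_const)).div_const _).aestronglyMeasurable
    · filter_upwards [self_mem_nhdsWithin] with q hq
      refine Eventually.of_forall fun ω => ?_
      have hq' : q ≠ q₀ := hq.2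
      rw [Real.norm_eq_abs, abs_div, div_le_one (abs_pos.mpr (sub_ne_zero.mpr hq'))]
      calc |min (Z ω - q) 0 - min (Z ω - q₀) 0| ≤ |(Z ω - q) - (Z ω - q₀)| := abs_min0 _ _
        _ = |q - q₀| := by rw [abs_sub_comm]; congr 1; ring
    · exact integrable_const 1
    · exact Eventually.of_forall hpt
  rw [hval] at key
  refine key.congr fun q => ?_
  rw [slope_def_field, ← integral_sub (hint q) (hint q₀), integral_div]

/-- One-sided derivative computation underlying the subgradient formula of
Theorem 2: `q ↦ E[(Z − q)⁻]` has right derivative `−P(Z ≤ q₀)` and left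
derivative `−P(Z < q₀)` at every `q₀`. -/
theorem stmt_7 {Ω : Type*} [MeasurableSpace Ω] (P : Measure Ω)
    [IsProbabilityMeasure P] (Z : Ω → ℝ) (hZ : Integrable Z P) (q₀ : ℝ) :
    HasDerivWithinAt (fun q : ℝ => ∫ ω, min (Z ω - q) 0 ∂P)
        (-(P {ω | Z ω ≤ q₀}).toReal) (Set.Ici q₀) q₀ ∧
      HasDerivWithinAt (fun q : ℝ => ∫ ω, min (Z ω - q) 0 ∂P)
        (-(P {ω | Z ω < q₀}).toReal) (Set.Iic q₀) q₀ := by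
  obtain ⟨Z', hZ'm, hZe⟩ := hZ.1
  have hZ' : Integrable Z' P := hZ.congr hZe
  have hZ'meas : Measurable Z' := hZ'm.measurable
  have hgeq : (fun q : ℝ => ∫ ω, min (Z ω - q) 0 ∂P)
      = fun q : ℝ => ∫ ω, min (Z' ω - q) 0 ∂P := by
    funext q
    exact integral_congr_ae (hZe.mono fun ω h => by simp only [h])
  have hm1 : P {ω | Z ω ≤ q₀} = P {ω | Z' ω ≤ q₀} :=
    measure_congr (hZe.mono fun ω h => by change (_ ≤ _) = (_ ≤ _); rw [h])
  have hm2 : P {ω | Z ω < q₀} = P {ω | Z' ω < q₀} :=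
    measure_congr (hZe.mono fun ω h => by change (_ < _) = (_ < _); rw [h])
  rw [hgeq, hm1, hm2]
  constructor
  · apply aux_deriv P Z' hZ'meas hZ' q₀ _ _ (measurableSet_le hZ'meas measurable_const)
    intro ω
    by_cases h : Z' ω ≤ q₀
    · have hind : ({ω | Z' ω ≤ q₀}).indicator (1 : Ω → ℝ) ω = 1 :=
        Set.indicator_of_mem h 1
      rw [hind]
      apply Tendsto.congr' _ tendsto_const_nhds
      filter_upwards [self_mem_nhdsWithin] with q hq
      have hq1 : q₀ < q := lt_of_le_of_ne hq.1 (Ne.symm hq.2)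
      rw [min_eq_left (by linarith : Z' ω - q ≤ 0), min_eq_left (by linarith : Z' ω - q₀ ≤ 0)]
      rw [eq_div_iff (sub_ne_zero.mpr hq.2)]; ring
    · push_neg at h
      have hind : ({ω | Z' ω ≤ q₀}).indicator (1 : Ω → ℝ) ω = 0 :=
        Set.indicator_of_notMem (by simpa using not_le.mpr h) 1
      rw [hind, neg_zero]
      apply Tendsto.congr' _ tendsto_const_nhds
      filter_upwards [(gt_mem_nhds h).filter_mono nhdsWithin_le_nhds] with q hq
      rw [min_eq_right (by linarith : (0:ℝ) ≤ Z' ω - q),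
        min_eq_right (by linarith : (0:ℝ) ≤ Z' ω - q₀)]
      simp
  · apply aux_deriv P Z' hZ'meas hZ' q₀ _ _ (measurableSet_lt hZ'meas measurable_const)
    intro ω
    by_cases h : Z' ω < q₀
    · have hind : ({ω | Z' ω < q₀}).indicator (1 : Ω → ℝ) ω = 1 :=
        Set.indicator_of_mem h 1
      rw [hind]
      apply Tendsto.congr' _ tendsto_const_nhds
      filter_upwards [self_mem_nhdsWithin,
        (lt_mem_nhds h).filter_mono nhdsWithin_le_nhds] with q hq hq2
      have hq1 : q < q₀ := lt_of_le_of_ne hq.1 hq.2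
      rw [min_eq_left (by linarith : Z' ω - q ≤ 0), min_eq_left (by linarith : Z' ω - q₀ ≤ 0)]
      rw [eq_div_iff (sub_ne_zero.mpr hq.2)]; ring
    · push_neg at h
      have hind : ({ω | Z' ω < q₀}).indicator (1 : Ω → ℝ) ω = 0 :=
        Set.indicator_of_notMem (by simpa using not_lt.mpr h) 1
      rw [hind, neg_zero]
      apply Tendsto.congr' _ tendsto_const_nhds
      filter_upwards [self_mem_nhdsWithin] with q hq
      have hq1 : q < q₀ := lt_of_le_of_ne hq.1 hq.2
      rw [min_eq_right (by linarith : (0:ℝ) ≤ Z' ω - q),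
        min_eq_right (by linarith : (0:ℝ) ≤ Z' ω - q₀)]
      simp
end

section
/- Let (Ω, ℙ) be a probability space, Z : Ω → ℝ an integrable random variable, and τ ∈ (0, 1). A point q* ∈ ℝ satisfies g_τ q ≤ g_τ q* for all q ∈ ℝ, where g_τ q := q + (1/τ) * E[min (Z − q, 0)], if and only if ℙ({ω | Z ω < q*}).toReal ≤ τ ≤ ℙ({ω | Z ω ≤ q*}).toReal. -/
open MeasureTheory

section RUaux

open Filter Topology

variable {Ω : Type*} [MeasurableSpace Ω] {P : Measure Ω} [IsProbabilityMeasure P]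

lemma myIntMin {Z : Ω → ℝ} (hZ : Integrable Z P) (q : ℝ) :
    Integrable (fun ω => min (Z ω - q) 0) P := by
  have h := ((hZ.sub (integrable_const q)).neg_part).neg
  refine h.congr (Filter.Eventually.of_forall fun ω => ?_)
  simp [min_def, max_def]
  split_ifs <;> linarith

lemma pt_bounds (x q1 q2 : ℝ) (h : q1 ≤ q2) :
    ((if x ≤ q1 then q2 - q1 else 0) ≤ min (x-q1) 0 - min (x-q2) 0) ∧
    (min (x-q1) 0 - min (x-q2) 0 ≤ if x < q2 then q2 - q1 else 0) := by
  constructor <;> simp only [min_def] <;> split_ifs <;> linarith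

lemma key_bounds {Z : Ω → ℝ} (hm : Measurable Z) (hZ : Integrable Z P)
    {q1 q2 : ℝ} (h : q1 ≤ q2) :
    (q2 - q1) * (P {ω | Z ω ≤ q1}).toReal ≤
        (∫ ω, min (Z ω - q1) 0 ∂P) - ∫ ω, min (Z ω - q2) 0 ∂P ∧
      (∫ ω, min (Z ω - q1) 0 ∂P) - ∫ ω, min (Z ω - q2) 0 ∂P ≤
        (q2 - q1) * (P {ω | Z ω < q2}).toReal := by
  have hs1 : MeasurableSet {ω | Z ω ≤ q1} := measurableSet_le hm measurable_const
  have hs2 : MeasurableSet {ω | Z ω < q2} := measurableSet_lt hm measurable_const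
  have hI1 := myIntMin hZ q1
  have hI2 := myIntMin hZ q2
  have hdiff : (∫ ω, min (Z ω - q1) 0 ∂P) - ∫ ω, min (Z ω - q2) 0 ∂P
      = ∫ ω, (min (Z ω - q1) 0 - min (Z ω - q2) 0) ∂P := (integral_sub hI1 hI2).symm
  have hind1 : ∫ ω, Set.indicator {ω | Z ω ≤ q1} (fun _ => q2 - q1) ω ∂P
      = (q2 - q1) * (P {ω | Z ω ≤ q1}).toReal := by
    rw [integral_indicator_const _ hs1, smul_eq_mul, mul_comm, measureReal_def]
  have hind2 : ∫ ω, Set.indicator {ω | Z ω < q2} (fun _ => q2 - q1) ω ∂P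
      = (q2 - q1) * (P {ω | Z ω < q2}).toReal := by
    rw [integral_indicator_const _ hs2, smul_eq_mul, mul_comm, measureReal_def]
  have hIind1 : Integrable (fun ω => Set.indicator {ω | Z ω ≤ q1} (fun _ => q2 - q1) ω) P :=
    (integrable_const _).indicator hs1
  have hIind2 : Integrable (fun ω => Set.indicator {ω | Z ω < q2} (fun _ => q2 - q1) ω) P :=
    (integrable_const _).indicator hs2
  constructor
  · rw [hdiff, ← hind1]
    refine integral_mono hIind1 (hI1.sub hI2) fun ω => ?_
    have := (pt_bounds (Z ω) q1 q2 h).1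
    simpa [Set.indicator_apply] using this
  · rw [hdiff, ← hind2]
    refine integral_mono (hI1.sub hI2) hIind2 fun ω => ?_
    have := (pt_bounds (Z ω) q1 q2 h).2
    simpa [Set.indicator_apply] using this

lemma scale_iff {τ q qs A B : ℝ} (hτ0 : 0 < τ) :
    (q + 1/τ * A ≤ qs + 1/τ * B) ↔ (τ*q + A ≤ τ*qs + B) := by
  rw [← mul_le_mul_iff_right₀ hτ0, mul_add, mul_add, ← mul_assoc, ← mul_assoc,
    mul_one_div, div_self hτ0.ne', one_mul, one_mul]

lemma main_meas {Z : Ω → ℝ} (hm : Measurable Z) (hZ : Integrable Z P)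
    (τ : ℝ) (hτ0 : 0 < τ) (hτ1 : τ < 1) (qstar : ℝ) :
    (∀ q : ℝ, q + (1 / τ) * ∫ ω, min (Z ω - q) 0 ∂P ≤
        qstar + (1 / τ) * ∫ ω, min (Z ω - qstar) 0 ∂P) ↔
      ((P {ω | Z ω < qstar}).toReal ≤ τ ∧ τ ≤ (P {ω | Z ω ≤ qstar}).toReal) := by
  have hτ' : (0:ℝ) < 1 / τ := by positivity
  constructor
  · intro hmax
    constructor
    · -- P(Z < q*) ≤ τ, using q < q* : P(Z ≤ q) ≤ τ
      have hq : ∀ q < qstar, (P {ω | Z ω ≤ q}).toReal ≤ τ := by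
        intro q hq
        have hk := (key_bounds hm hZ hq.le).1
        have hmx := hmax q
        set A := ∫ ω, min (Z ω - q) 0 ∂P
        set B := ∫ ω, min (Z ω - qstar) 0 ∂P
        set p := (P {ω | Z ω ≤ q}).toReal
        have hp0 : 0 ≤ p := ENNReal.toReal_nonneg
        rw [scale_iff hτ0] at hmx
        nlinarith [mul_pos hτ0 (sub_pos.mpr hq)]
      -- limit along q*-1/(n+1)
      set s : ℕ → Set Ω := fun n => {ω | Z ω ≤ qstar - 1/(n+1)} with hs
      have hmono : Monotone s := by
        intro a b hab ω hω
        simp only [hs, Set.mem_setOf_eq] at *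
        have : (1:ℝ)/(b+1) ≤ 1/(a+1) := by
          apply one_div_le_one_div_of_le <;> [positivity; exact_mod_cast by omega]
        linarith
      have hU : (⋃ n, s n) = {ω | Z ω < qstar} := by
        ext ω
        simp only [hs, Set.mem_iUnion, Set.mem_setOf_eq]
        constructor
        · rintro ⟨n, hn⟩
          have : (0:ℝ) < 1/(n+1) := by positivity
          linarith
        · intro hω
          obtain ⟨n, hn⟩ := exists_nat_one_div_lt (sub_pos.mpr hω)
          exact ⟨n, by linarith⟩
      have htt := tendsto_measure_iUnion_atTop (μ := P) hmono
      rw [hU] at htt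
      have htt' : Tendsto (fun n => (P (s n)).toReal) atTop
          (𝓝 (P {ω | Z ω < qstar}).toReal) :=
        (ENNReal.tendsto_toReal (measure_ne_top P _)).comp htt
      refine le_of_tendsto htt' (Eventually.of_forall fun n => ?_)
      apply hq
      have : (0:ℝ) < 1/(n+1) := by positivity
      linarith
    · -- τ ≤ P(Z ≤ q*), using q > q* : τ ≤ P(Z < q)
      have hq : ∀ q, qstar < q → τ ≤ (P {ω | Z ω < q}).toReal := by
        intro q hq
        have hk := (key_bounds hm hZ hq.le).2
        have hmx := hmax q
        set A := ∫ ω, min (Z ω - qstar) 0 ∂P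
        set B := ∫ ω, min (Z ω - q) 0 ∂P
        set p := (P {ω | Z ω < q}).toReal
        rw [scale_iff hτ0] at hmx
        nlinarith [mul_pos hτ0 (sub_pos.mpr hq)]
      set s : ℕ → Set Ω := fun n => {ω | Z ω < qstar + 1/(n+1)} with hs
      have hanti : Antitone s := by
        intro a b hab ω hω
        simp only [hs, Set.mem_setOf_eq] at *
        have : (1:ℝ)/(b+1) ≤ 1/(a+1) := by
          apply one_div_le_one_div_of_le <;> [positivity; exact_mod_cast by omega]
        linarith
      have hI : (⋂ n, s n) = {ω | Z ω ≤ qstar} := by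
        ext ω
        simp only [hs, Set.mem_iInter, Set.mem_setOf_eq]
        constructor
        · intro hall
          by_contra hc
          push_neg at hc
          obtain ⟨n, hn⟩ := exists_nat_one_div_lt (sub_pos.mpr hc)
          exact absurd (hall n) (by linarith)
        · intro hω n
          have : (0:ℝ) < 1/(n+1) := by positivity
          linarith
      have htt := tendsto_measure_iInter_atTop (μ := P)
        (fun n => (measurableSet_lt hm measurable_const).nullMeasurableSet)
        hanti ⟨0, measure_ne_top P _⟩
      rw [hI] at htt
      have htt' : Tendsto (fun n => (P (s n)).toReal) atTop
          (𝓝 (P {ω | Z ω ≤ qstar}).toReal) :=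
        (ENNReal.tendsto_toReal (measure_ne_top P _)).comp htt
      refine ge_of_tendsto htt' (Eventually.of_forall fun n => ?_)
      apply hq
      have : (0:ℝ) < 1/(n+1) := by positivity
      linarith
  · rintro ⟨hlt, hle⟩ q
    rcases le_or_gt q qstar with hcase | hcase
    · have hk := (key_bounds hm hZ hcase).2
      set A := ∫ ω, min (Z ω - q) 0 ∂P
      set B := ∫ ω, min (Z ω - qstar) 0 ∂P
      set p := (P {ω | Z ω < qstar}).toReal
      have hp0 : 0 ≤ p := ENNReal.toReal_nonneg
      rw [scale_iff hτ0]
      nlinarith [mul_le_mul_of_nonneg_left hlt (sub_nonneg.mpr hcase)]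
    · have hk := (key_bounds hm hZ hcase.le).1
      set A := ∫ ω, min (Z ω - qstar) 0 ∂P
      set B := ∫ ω, min (Z ω - q) 0 ∂P
      set p := (P {ω | Z ω ≤ qstar}).toReal
      rw [scale_iff hτ0]
      nlinarith [mul_le_mul_of_nonneg_left hle (sub_nonneg.mpr hcase.le)]


end RUaux

/-- Rockafellar–Uryasev characterization used in Theorem 2: `q*` maximizes
`g_τ q = q + (1/τ) E[(Z − q)⁻]` over `ℝ` iff `q*` is a `τ`-quantile of `Z`,
i.e. `P(Z < q*) ≤ τ ≤ P(Z ≤ q*)`. -/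
theorem stmt_9 {Ω : Type*} [MeasurableSpace Ω] (P : Measure Ω)
    [IsProbabilityMeasure P] (Z : Ω → ℝ) (hZ : Integrable Z P)
    (τ : ℝ) (hτ0 : 0 < τ) (hτ1 : τ < 1) (qstar : ℝ) :
    (∀ q : ℝ, q + (1 / τ) * ∫ ω, min (Z ω - q) 0 ∂P ≤
        qstar + (1 / τ) * ∫ ω, min (Z ω - qstar) 0 ∂P) ↔
      ((P {ω | Z ω < qstar}).toReal ≤ τ ∧ τ ≤ (P {ω | Z ω ≤ qstar}).toReal) := by
  set Z' : Ω → ℝ := hZ.1.aemeasurable.mk Z with hZ'def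
  have hm : Measurable Z' := hZ.1.aemeasurable.measurable_mk
  have heq : Z =ᵐ[P] Z' := hZ.1.aemeasurable.ae_eq_mk
  have hZ' : Integrable Z' P := hZ.congr heq
  have hint : ∀ q : ℝ, (∫ ω, min (Z ω - q) 0 ∂P) = ∫ ω, min (Z' ω - q) 0 ∂P := fun q =>
    integral_congr_ae (heq.mono fun ω h => by simp only [h])
  have hlt : P {ω | Z ω < qstar} = P {ω | Z' ω < qstar} := by
    refine measure_congr (heq.mono fun ω h => ?_)
    show (Z ω < qstar) = (Z' ω < qstar)
    rw [h]
  have hle : P {ω | Z ω ≤ qstar} = P {ω | Z' ω ≤ qstar} := by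
    refine measure_congr (heq.mono fun ω h => ?_)
    show (Z ω ≤ qstar) = (Z' ω ≤ qstar)
    rw [h]
  simp only [hint, hlt, hle]
  exact main_meas hm hZ' τ hτ0 hτ1 qstar
end

section
/- Let (Ω, ℙ) be a probability space, Z : Ω → ℝ an integrable random variable, N ≥ 1, w : Fin N → ℝ, and τ : Fin N → ℝ with τ i ∈ (0, 1] for all i. For q : Fin N → ℝ define H q := E[∑ i, w i * (q i + (1/τ i) * min (Z − q i, 0))]. Then for every q : Fin N → ℝ and every index i, the function u ↦ H (Function.update q i u) has derivative w i * (1 − ℙ({ω | Z ω ≤ q i}).toReal / τ i) within [q i, ∞) at q i (right partial derivative) and derivative w i * (1 − ℙ({ω | Z ω < q i}).toReal / τ i) within (−∞, q i] at q i (left partial derivative). -/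
open MeasureTheory Filter Set Topology

private lemma minlip (p q : ℝ) : |min p 0 - min q 0| ≤ |p - q| := by
  rcases le_total p 0 with hp|hp <;> rcases le_total q 0 with hq|hq <;>
    simp [min_eq_left, min_eq_right, hp, hq] <;> cases abs_cases (p - q) <;>
    cases abs_cases p <;> cases abs_cases q <;> linarith

private lemma intmin {Ω} [MeasurableSpace Ω] {P : Measure Ω} [IsProbabilityMeasure P] {Z : Ω → ℝ}
    (hZ : Integrable Z P) (u : ℝ) : Integrable (fun ω => min (Z ω - u) 0) P := by
  simpa [Pi.inf_def] using (hZ.sub (integrable_const u)).inf (integrable_const 0)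

private lemma deriv_right {Ω} [MeasurableSpace Ω] (P : Measure Ω) [IsProbabilityMeasure P]
    {Z : Ω → ℝ} (hm : Measurable Z) (hZ : Integrable Z P) (a : ℝ) :
    HasDerivWithinAt (fun u => ∫ ω, min (Z ω - u) 0 ∂P) (-(P {ω | Z ω ≤ a}).toReal)
      (Set.Ici a) a := by
  have hint : ∀ u, Integrable (fun ω => min (Z ω - u) 0) P := intmin hZ
  have hms : MeasurableSet {ω | Z ω ≤ a} := hm measurableSet_Iic
  rw [hasDerivWithinAt_iff_tendsto_slope, show Set.Ici a \ {a} = Set.Ioi a by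
    ext x; simp only [Set.mem_diff, Set.mem_Ici, Set.mem_singleton_iff, Set.mem_Ioi]
    exact ⟨fun h => lt_of_le_of_ne h.1 (Ne.symm h.2), fun h => ⟨h.le, h.ne'⟩⟩]
  have key : Tendsto (fun u => ∫ ω, (min (Z ω - u) 0 - min (Z ω - a) 0) / (u - a) ∂P)
      (𝓝[>] a) (𝓝 (∫ ω, ({ω | Z ω ≤ a}).indicator (fun _ => (-1 : ℝ)) ω ∂P)) := by
    apply tendsto_integral_filter_of_dominated_convergence (fun _ => (1:ℝ))
    · filter_upwards with u
      exact (((hint u).sub (hint a)).div_const _).aestronglyMeasurable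
    · filter_upwards [self_mem_nhdsWithin] with u (hu : u ∈ Ioi a)
      filter_upwards with ω
      have h1 : |min (Z ω - u) 0 - min (Z ω - a) 0| ≤ |u - a| := by
        calc |min (Z ω - u) 0 - min (Z ω - a) 0| ≤ |(Z ω - u) - (Z ω - a)| := minlip _ _
        _ = |u - a| := by rw [show (Z ω - u) - (Z ω - a) = -(u - a) by ring, abs_neg]
      have h2 : (0:ℝ) < |u - a| := abs_pos.2 (sub_ne_zero.2 (ne_of_gt hu))
      rw [Real.norm_eq_abs, abs_div, div_le_one h2]
      exact h1
    · exact integrable_const 1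
    · filter_upwards with ω
      by_cases hω : Z ω ≤ a
      · have h : ∀ᶠ u in 𝓝[>] a, (min (Z ω - u) 0 - min (Z ω - a) 0) / (u - a) = -1 := by
          filter_upwards [self_mem_nhdsWithin] with u (hu : a < u)
          rw [min_eq_left (by linarith), min_eq_left (by linarith),
            div_eq_iff (sub_ne_zero.2 (ne_of_gt hu))]
          ring
        rw [Set.indicator_of_mem (show ω ∈ _ from hω)]
        exact tendsto_const_nhds.congr' (h.mono fun _ h => h.symm)
      · push_neg at hω
        have h : ∀ᶠ u in 𝓝[>] a, (min (Z ω - u) 0 - min (Z ω - a) 0) / (u - a) = 0 := by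
          filter_upwards [Ioo_mem_nhdsGT hω] with u hu
          rw [min_eq_right (sub_nonneg.2 hu.2.le), min_eq_right (sub_nonneg.2 hω.le)]
          simp
        rw [Set.indicator_of_notMem (show ω ∉ {ω | Z ω ≤ a} from not_le.2 hω)]
        exact tendsto_const_nhds.congr' (h.mono fun _ h => h.symm)
  have hind : ∫ ω, ({ω | Z ω ≤ a}).indicator (fun _ => (-1 : ℝ)) ω ∂P
      = -(P {ω | Z ω ≤ a}).toReal := by
    rw [integral_indicator_const _ hms]; simp [measureReal_def]
  rw [hind] at key
  refine key.congr' ?_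
  filter_upwards [self_mem_nhdsWithin] with u (hu : a < u)
  rw [slope_def_field, ← integral_sub (hint u) (hint a), ← integral_div]

private lemma deriv_left {Ω} [MeasurableSpace Ω] (P : Measure Ω) [IsProbabilityMeasure P]
    {Z : Ω → ℝ} (hm : Measurable Z) (hZ : Integrable Z P) (a : ℝ) :
    HasDerivWithinAt (fun u => ∫ ω, min (Z ω - u) 0 ∂P) (-(P {ω | Z ω < a}).toReal)
      (Set.Iic a) a := by
  have hint : ∀ u, Integrable (fun ω => min (Z ω - u) 0) P := intmin hZ
  have hms : MeasurableSet {ω | Z ω < a} := hm measurableSet_Iio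
  rw [hasDerivWithinAt_iff_tendsto_slope, Set.Iic_diff_right]
  have key : Tendsto (fun u => ∫ ω, (min (Z ω - u) 0 - min (Z ω - a) 0) / (u - a) ∂P)
      (𝓝[<] a) (𝓝 (∫ ω, ({ω | Z ω < a}).indicator (fun _ => (-1 : ℝ)) ω ∂P)) := by
    apply tendsto_integral_filter_of_dominated_convergence (fun _ => (1:ℝ))
    · filter_upwards with u
      exact (((hint u).sub (hint a)).div_const _).aestronglyMeasurable
    · filter_upwards [self_mem_nhdsWithin] with u (hu : u ∈ Iio a)
      filter_upwards with ω
      have h1 : |min (Z ω - u) 0 - min (Z ω - a) 0| ≤ |u - a| := by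
        calc |min (Z ω - u) 0 - min (Z ω - a) 0| ≤ |(Z ω - u) - (Z ω - a)| := minlip _ _
        _ = |u - a| := by rw [show (Z ω - u) - (Z ω - a) = -(u - a) by ring, abs_neg]
      have h2 : (0:ℝ) < |u - a| := abs_pos.2 (sub_ne_zero.2 (ne_of_lt hu))
      rw [Real.norm_eq_abs, abs_div, div_le_one h2]
      exact h1
    · exact integrable_const 1
    · filter_upwards with ω
      by_cases hω : Z ω < a
      · have h : ∀ᶠ u in 𝓝[<] a, (min (Z ω - u) 0 - min (Z ω - a) 0) / (u - a) = -1 := by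
          filter_upwards [Ioo_mem_nhdsLT hω] with u hu
          rw [min_eq_left (by linarith [hu.1]), min_eq_left (by linarith),
            div_eq_iff (sub_ne_zero.2 (ne_of_lt hu.2))]
          ring
        rw [Set.indicator_of_mem (show ω ∈ _ from hω)]
        exact tendsto_const_nhds.congr' (h.mono fun _ h => h.symm)
      · push_neg at hω
        have h : ∀ᶠ u in 𝓝[<] a, (min (Z ω - u) 0 - min (Z ω - a) 0) / (u - a) = 0 := by
          filter_upwards [self_mem_nhdsWithin] with u (hu : u < a)
          rw [min_eq_right (by linarith : (0:ℝ) ≤ Z ω - u),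
            min_eq_right (sub_nonneg.2 hω)]
          simp
        rw [Set.indicator_of_notMem (show ω ∉ {ω | Z ω < a} from not_lt.2 hω)]
        exact tendsto_const_nhds.congr' (h.mono fun _ h => h.symm)
  have hind : ∫ ω, ({ω | Z ω < a}).indicator (fun _ => (-1 : ℝ)) ω ∂P
      = -(P {ω | Z ω < a}).toReal := by
    rw [integral_indicator_const _ hms]; simp [measureReal_def]
  rw [hind] at key
  refine key.congr' ?_
  filter_upwards [self_mem_nhdsWithin] with u (hu : u < a)
  rw [slope_def_field, ← integral_sub (hint u) (hint a), ← integral_div]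

/-- Explicit subgradient computation of `∂_{q_i} E[h_q(Z)]` in the proof of
Theorem 2: the `i`-th right partial derivative of
`H q = E[∑ i, w i (q i + (1/τ i)(Z − q i)⁻)]` at `q` is
`w i (1 − P(Z ≤ q i)/τ i)` and the left partial derivative is
`w i (1 − P(Z < q i)/τ i)`. -/
theorem stmt_10 {Ω : Type*} [MeasurableSpace Ω] (P : Measure Ω)
    [IsProbabilityMeasure P] (Z : Ω → ℝ) (hZ : Integrable Z P)
    (N : ℕ) (hN : 1 ≤ N) (w : Fin N → ℝ) (τ : Fin N → ℝ)
    (hτ : ∀ i, 0 < τ i ∧ τ i ≤ 1)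
    (H : (Fin N → ℝ) → ℝ)
    (hH : H = fun q => ∫ ω, ∑ i, w i * (q i + (1 / τ i) * min (Z ω - q i) 0) ∂P)
    (q : Fin N → ℝ) (i : Fin N) :
    HasDerivWithinAt (fun u : ℝ => H (Function.update q i u))
        (w i * (1 - (P {ω | Z ω ≤ q i}).toReal / τ i))
        (Set.Ici (q i)) (q i) ∧
      HasDerivWithinAt (fun u : ℝ => H (Function.update q i u))
        (w i * (1 - (P {ω | Z ω < q i}).toReal / τ i))
        (Set.Iic (q i)) (q i) := by
  obtain ⟨Z₀, hm0, hae⟩ : ∃ Z₀, StronglyMeasurable Z₀ ∧ Z =ᵐ[P] Z₀ :=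
    ⟨hZ.1.mk Z, hZ.1.stronglyMeasurable_mk, hZ.1.ae_eq_mk⟩
  have hZ₀ : Integrable Z₀ P := hZ.congr hae
  have hm : Measurable Z₀ := hm0.measurable
  set a := q i with ha
  have hmle : P {ω | Z ω ≤ a} = P {ω | Z₀ ω ≤ a} :=
    measure_congr (hae.mono fun ω h => by
      show (Z ω ≤ a) = (Z₀ ω ≤ a); rw [h])
  have hmlt : P {ω | Z ω < a} = P {ω | Z₀ ω < a} :=
    measure_congr (hae.mono fun ω h => by
      show (Z ω < a) = (Z₀ ω < a); rw [h])
  set G : ℝ → ℝ := fun u => ∫ ω, min (Z₀ ω - u) 0 ∂P with hG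
  have hGZ : ∀ c : ℝ, ∫ ω, min (Z ω - c) 0 ∂P = G c := fun c =>
    integral_congr_ae (hae.mono fun ω h => by simp [h])
  have hterm : ∀ (j : Fin N) (c : ℝ), ∫ ω, w j * (c + (1 / τ j) * min (Z ω - c) 0) ∂P
      = w j * c + w j * (1 / τ j) * G c := by
    intro j c
    rw [integral_const_mul, integral_add (integrable_const c) ((intmin hZ c).const_mul _),
      integral_const, integral_const_mul, hGZ]
    simp [measure_univ]; ring
  set C : ℝ := ∑ j ∈ Finset.univ.erase i, (w j * q j + w j * (1 / τ j) * G (q j)) with hC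
  have hupd : ∀ u : ℝ, H (Function.update q i u)
      = C + (w i * u + w i * (1 / τ i) * G u) := by
    intro u
    rw [hH]
    calc ∫ ω, ∑ j, w j * (Function.update q i u j
          + (1 / τ j) * min (Z ω - Function.update q i u j) 0) ∂P
        = ∑ j, ∫ ω, w j * (Function.update q i u j
          + (1 / τ j) * min (Z ω - Function.update q i u j) 0) ∂P := by
          refine integral_finset_sum _ fun j _ => ?_
          exact ((integrable_const _).add ((intmin hZ _).const_mul _)).const_mul _
      _ = ∑ j, (w j * (Function.update q i u j)
          + w j * (1 / τ j) * G (Function.update q i u j)) :=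
          Finset.sum_congr rfl fun j _ => hterm j _
      _ = (w i * u + w i * (1 / τ i) * G u)
          + ∑ j ∈ Finset.univ.erase i,
            (w j * (Function.update q i u j) + w j * (1 / τ j) * G (Function.update q i u j)) := by
          rw [← Finset.add_sum_erase _ _ (Finset.mem_univ i), Function.update_self]
      _ = C + (w i * u + w i * (1 / τ i) * G u) := by
          rw [add_comm]
          congr 1
          exact Finset.sum_congr rfl fun j hj => by
            rw [Function.update_of_ne (Finset.ne_of_mem_erase hj)]
  have hfun : (fun u : ℝ => H (Function.update q i u))
      = fun u => C + (w i * u + w i * (1 / τ i) * G u) := funext hupd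
  have h1 : ∀ s : Set ℝ, HasDerivWithinAt (fun u : ℝ => w i * u) (w i) s a := fun s => by
    simpa using (hasDerivWithinAt_id a s).const_mul (w i)
  constructor
  · rw [hfun]
    have h2 := (deriv_right P hm hZ₀ a).const_mul (w i * (1 / τ i))
    have h3 := ((h1 _).add h2).const_add C
    refine h3.congr_deriv ?_
    rw [hmle]; ring
  · rw [hfun]
    have h2 := (deriv_left P hm hZ₀ a).const_mul (w i * (1 / τ i))
    have h3 := ((h1 _).add h2).const_add C
    refine h3.congr_deriv ?_
    rw [hmlt]; ring
end

section
/- Let (Ω, ℙ) be a probability space, Z : Ω → ℝ an integrable random variable, N ≥ 1, w : Fin N → ℝ with w i > 0 for all i, and τ : Fin N → ℝ with τ i ∈ (0, 1) for all i. For q : Fin N → ℝ define H q := E[∑ i, w i * (q i + (1/τ i) * min (Z − q i, 0))]. Then q* : Fin N → ℝ satisfies H q ≤ H q* for all q : Fin N → ℝ if and only if for every i, ℙ({ω | Z ω < q* i}).toReal ≤ τ i ≤ ℙ({ω | Z ω ≤ q* i}).toReal, i.e. every q* i is a τ i-quantile of Z. -/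
open MeasureTheory


lemma stmt11_min_eq (a : ℝ) : min a 0 = (a - |a|) / 2 := by
  rcases le_total a 0 with h | h
  · rw [min_eq_left h, abs_of_nonpos h]; ring
  · rw [min_eq_right h, abs_of_nonneg h]; ring

lemma stmt11_int_min {Ω : Type*} [MeasurableSpace Ω] (P : Measure Ω)
    [IsProbabilityMeasure P] {Z : Ω → ℝ} (hZ : Integrable Z P) (t : ℝ) :
    Integrable (fun ω => min (Z ω - t) 0) P := by
  have h : (fun ω => min (Z ω - t) 0)
      = fun ω => ((Z ω - t) - |Z ω - t|) / 2 := by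
    funext ω; exact stmt11_min_eq _
  rw [h]
  exact ((hZ.sub (integrable_const t)).sub (hZ.sub (integrable_const t)).abs).div_const 2

lemma stmt11_aux1 {a p τ : ℝ} (hτ : 0 < τ) (ha : 0 ≤ a) (hp : p ≤ τ) :
    0 ≤ a + (1/τ) * (-(a * p)) := by
  have h1 : (1/τ) * (-(a*p)) = -(a*p/τ) := by ring
  rw [h1, ← sub_eq_add_neg, sub_nonneg, div_le_iff₀ hτ]
  exact mul_le_mul_of_nonneg_left hp ha

lemma stmt11_aux2 {a p τ : ℝ} (hτ : 0 < τ) (ha : 0 ≤ a) (hp : τ ≤ p) :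
    a + (1/τ) * (-(a * p)) ≤ 0 := by
  have h1 : (1/τ) * (-(a*p)) = -(a*p/τ) := by ring
  rw [h1, ← sub_eq_add_neg, sub_nonpos, le_div_iff₀ hτ]
  exact mul_le_mul_of_nonneg_left hp ha

lemma stmt11_aux3 {a p τ : ℝ} (hτ : 0 < τ) (ha : 0 < a)
    (h : 0 ≤ a + (1/τ) * (-(a * p))) : p ≤ τ := by
  have h1 : (1/τ) * (-(a*p)) = -(a*p/τ) := by ring
  rw [h1, ← sub_eq_add_neg, sub_nonneg, div_le_iff₀ hτ] at h
  exact le_of_mul_le_mul_left h ha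

lemma stmt11_aux4 {a p τ : ℝ} (hτ : 0 < τ) (ha : 0 < a)
    (h : a + (1/τ) * (-(a * p)) ≤ 0) : τ ≤ p := by
  have h1 : (1/τ) * (-(a*p)) = -(a*p/τ) := by ring
  rw [h1, ← sub_eq_add_neg, sub_nonpos, le_div_iff₀ hτ] at h
  exact le_of_mul_le_mul_left h ha

lemma stmt11_key {Ω : Type*} [MeasurableSpace Ω] (P : Measure Ω)
    [IsProbabilityMeasure P] {Z : Ω → ℝ} (hZm : Measurable Z) (hZ : Integrable Z P)
    {τ : ℝ} (hτ0 : 0 < τ) (t : ℝ) :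
    (∀ s, (∫ ω, (s + (1/τ) * min (Z ω - s) 0) ∂P) ≤ ∫ ω, (t + (1/τ) * min (Z ω - t) 0) ∂P)
    ↔ ((P {ω | Z ω < t}).toReal ≤ τ ∧ τ ≤ (P {ω | Z ω ≤ t}).toReal) := by
  set m : ℝ → ℝ := fun u => ∫ ω, min (Z ω - u) 0 ∂P with hm_def
  have hf : ∀ u : ℝ, (∫ ω, (u + (1/τ) * min (Z ω - u) 0) ∂P) = u + (1/τ) * m u := by
    intro u
    rw [integral_add (integrable_const u) ((stmt11_int_min P hZ u).const_mul (1/τ)),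
      integral_const, integral_const_mul]
    simp [hm_def]
  have hm : ∀ s u : ℝ, s ≤ u →
      -((u - s) * (P {ω | Z ω < u}).toReal) ≤ m u - m s ∧
      m u - m s ≤ -((u - s) * (P {ω | Z ω ≤ s}).toReal) := by
    intro s u hsu
    have hdiff : m u - m s = ∫ ω, (min (Z ω - u) 0 - min (Z ω - s) 0) ∂P := by
      rw [integral_sub (stmt11_int_min P hZ u) (stmt11_int_min P hZ s)]
    have hms1 : MeasurableSet {ω | Z ω < u} := hZm measurableSet_Iio
    have hms2 : MeasurableSet {ω | Z ω ≤ s} := hZm measurableSet_Iic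
    constructor
    · have hlow : ∀ ω, Set.indicator {ω | Z ω < u} (fun _ => s - u) ω
          ≤ min (Z ω - u) 0 - min (Z ω - s) 0 := by
        intro ω
        by_cases h : Z ω < u
        · rw [Set.indicator_of_mem (show ω ∈ {ω | Z ω < u} from h)]
          have h1 : min (Z ω - u) 0 = Z ω - u := min_eq_left (by linarith)
          have h2 : min (Z ω - s) 0 ≤ Z ω - s := min_le_left _ _
          linarith
        · rw [Set.indicator_of_notMem (show ω ∉ {ω | Z ω < u} from h)]
          push_neg at h
          have h1 : min (Z ω - u) 0 = 0 := min_eq_right (by linarith)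
          have h2 : min (Z ω - s) 0 = 0 := min_eq_right (by linarith)
          linarith
      have hint : (∫ ω, Set.indicator {ω | Z ω < u} (fun _ => s - u) ω ∂P)
          = (P {ω | Z ω < u}).toReal * (s - u) := by
        rw [integral_indicator_const _ hms1]
        simp [smul_eq_mul, Measure.real]
      have key : (∫ ω, Set.indicator {ω | Z ω < u} (fun _ => s - u) ω ∂P)
          ≤ ∫ ω, (min (Z ω - u) 0 - min (Z ω - s) 0) ∂P :=
        integral_mono ((integrable_const (s - u)).indicator hms1)
          ((stmt11_int_min P hZ u).sub (stmt11_int_min P hZ s)) hlow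
      rw [hint] at key
      rw [hdiff]
      nlinarith [key]
    · have hup : ∀ ω, min (Z ω - u) 0 - min (Z ω - s) 0
          ≤ Set.indicator {ω | Z ω ≤ s} (fun _ => s - u) ω := by
        intro ω
        by_cases h : Z ω ≤ s
        · rw [Set.indicator_of_mem (show ω ∈ {ω | Z ω ≤ s} from h)]
          have h1 : min (Z ω - u) 0 = Z ω - u := min_eq_left (by linarith)
          have h2 : min (Z ω - s) 0 = Z ω - s := min_eq_left (by linarith)
          linarith
        · rw [Set.indicator_of_notMem (show ω ∉ {ω | Z ω ≤ s} from h)]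
          push_neg at h
          have h2 : min (Z ω - u) 0 ≤ min (Z ω - s) 0 :=
            min_le_min (by linarith) le_rfl
          linarith
      have hint : (∫ ω, Set.indicator {ω | Z ω ≤ s} (fun _ => s - u) ω ∂P)
          = (P {ω | Z ω ≤ s}).toReal * (s - u) := by
        rw [integral_indicator_const _ hms2]
        simp [smul_eq_mul, Measure.real]
      have key : (∫ ω, (min (Z ω - u) 0 - min (Z ω - s) 0) ∂P)
          ≤ ∫ ω, Set.indicator {ω | Z ω ≤ s} (fun _ => s - u) ω ∂P :=
        integral_mono ((stmt11_int_min P hZ u).sub (stmt11_int_min P hZ s))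
          ((integrable_const (s - u)).indicator hms2) hup
      rw [hint] at key
      rw [hdiff]
      nlinarith [key]
  have hτ' : (0:ℝ) ≤ 1/τ := (one_div_pos.2 hτ0).le
  constructor
  · intro hmax
    have h1 : ∀ s, s < t → (P {ω | Z ω ≤ s}).toReal ≤ τ := by
      intro s hs
      have hle := hmax s
      rw [hf, hf] at hle
      have hb := mul_le_mul_of_nonneg_left (hm s t hs.le).2 hτ'
      refine stmt11_aux3 hτ0 (by linarith : (0:ℝ) < t - s) ?_
      linarith [hb, hle]
    have h2 : ∀ s, t < s → τ ≤ (P {ω | Z ω < s}).toReal := by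
      intro s hs
      have hle := hmax s
      rw [hf, hf] at hle
      have hb := mul_le_mul_of_nonneg_left (hm t s hs.le).1 hτ'
      refine stmt11_aux4 hτ0 (by linarith : (0:ℝ) < s - t) ?_
      linarith [hb, hle]
    constructor
    · have hset : {ω | Z ω < t} = ⋃ n : ℕ, {ω | Z ω ≤ t - 1/((n:ℝ)+1)} := by
        ext ω
        simp only [Set.mem_setOf_eq, Set.mem_iUnion]
        constructor
        · intro h
          obtain ⟨n, hn⟩ := exists_nat_one_div_lt (sub_pos.2 h)
          exact ⟨n, by linarith⟩
        · rintro ⟨n, hn⟩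
          have : (0:ℝ) < 1/((n:ℝ)+1) := by positivity
          linarith
      have hmono : Monotone (fun n : ℕ => {ω | Z ω ≤ t - 1/((n:ℝ)+1)}) := by
        intro a b hab ω hω
        simp only [Set.mem_setOf_eq] at *
        have hba : (1:ℝ)/((b:ℝ)+1) ≤ 1/((a:ℝ)+1) := by
          apply one_div_le_one_div_of_le (by positivity)
          have : (a:ℝ) ≤ b := Nat.cast_le.2 hab
          linarith
        linarith
      have hsup : P {ω | Z ω < t} ≤ ENNReal.ofReal τ := by
        rw [hset, hmono.directed_le.measure_iUnion]
        refine iSup_le fun n => ?_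
        have hs : t - 1/((n:ℝ)+1) < t := by
          have : (0:ℝ) < 1/((n:ℝ)+1) := by positivity
          linarith
        exact (ENNReal.le_ofReal_iff_toReal_le (measure_ne_top P _) hτ0.le).2 (h1 _ hs)
      exact ENNReal.toReal_le_of_le_ofReal hτ0.le hsup
    · have hset : {ω | Z ω ≤ t} = ⋂ n : ℕ, {ω | Z ω < t + 1/((n:ℝ)+1)} := by
        ext ω
        simp only [Set.mem_setOf_eq, Set.mem_iInter]
        constructor
        · intro h n
          have : (0:ℝ) < 1/((n:ℝ)+1) := by positivity
          linarith
        · intro h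
          by_contra hc
          push_neg at hc
          obtain ⟨n, hn⟩ := exists_nat_one_div_lt (sub_pos.2 hc)
          have := h n
          linarith
      have hanti : Antitone (fun n : ℕ => {ω | Z ω < t + 1/((n:ℝ)+1)}) := by
        intro a b hab ω hω
        simp only [Set.mem_setOf_eq] at *
        have hba : (1:ℝ)/((b:ℝ)+1) ≤ 1/((a:ℝ)+1) := by
          apply one_div_le_one_div_of_le (by positivity)
          have : (a:ℝ) ≤ b := Nat.cast_le.2 hab
          linarith
        linarith
      have hinf : ENNReal.ofReal τ ≤ P {ω | Z ω ≤ t} := by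
        rw [hset, hanti.measure_iInter
          (fun n => (hZm measurableSet_Iio :
            MeasurableSet {ω | Z ω < t + 1/((n:ℝ)+1)}).nullMeasurableSet)
          ⟨0, measure_ne_top P _⟩]
        refine le_iInf fun n => ?_
        have hs : t < t + 1/((n:ℝ)+1) := by
          have : (0:ℝ) < 1/((n:ℝ)+1) := by positivity
          linarith
        exact ENNReal.ofReal_le_of_le_toReal (h2 _ hs)
      exact (ENNReal.ofReal_le_iff_le_toReal (measure_ne_top P _)).1 hinf
  · rintro ⟨h1, h2⟩ s
    rw [hf, hf]
    rcases le_total s t with hst | hts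
    · have hb := mul_le_mul_of_nonneg_left (hm s t hst).1 hτ'
      have := stmt11_aux1 hτ0 (by linarith : (0:ℝ) ≤ t - s) h1
      linarith [hb, this]
    · have hb := mul_le_mul_of_nonneg_left (hm t s hts).2 hτ'
      have := stmt11_aux2 hτ0 (by linarith : (0:ℝ) ≤ s - t) h2
      linarith [hb, this]

/-- Identification of the maximizers of `q ↦ E[h_q(Z)]` in Theorem 2: with
positive weights `w i` and levels `τ i ∈ (0,1)`, a vector `q*` maximizes
`H q = E[∑ i, w i (q i + (1/τ i)(Z − q i)⁻)]` iff each `q* i` is a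
`τ i`-quantile of `Z`. -/
theorem stmt_11 {Ω : Type*} [MeasurableSpace Ω] (P : Measure Ω)
    [IsProbabilityMeasure P] (Z : Ω → ℝ) (hZ : Integrable Z P)
    (N : ℕ) (hN : 1 ≤ N) (w : Fin N → ℝ) (hw : ∀ i, 0 < w i)
    (τ : Fin N → ℝ) (hτ : ∀ i, 0 < τ i ∧ τ i < 1)
    (H : (Fin N → ℝ) → ℝ)
    (hH : H = fun q => ∫ ω, ∑ i, w i * (q i + (1 / τ i) * min (Z ω - q i) 0) ∂P)
    (qstar : Fin N → ℝ) :
    (∀ q : Fin N → ℝ, H q ≤ H qstar) ↔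
      (∀ i, (P {ω | Z ω < qstar i}).toReal ≤ τ i ∧
        τ i ≤ (P {ω | Z ω ≤ qstar i}).toReal) := by
  -- replace Z by a measurable representative
  set Z' : Ω → ℝ := hZ.1.mk Z with hZ'_def
  have hZae : Z =ᵐ[P] Z' := hZ.1.ae_eq_mk
  have hZ'm : Measurable Z' := hZ.1.stronglyMeasurable_mk.measurable
  have hZ' : Integrable Z' P := hZ.congr hZae
  have hPlt : ∀ c : ℝ, P {ω | Z ω < c} = P {ω | Z' ω < c} := by
    intro c
    apply measure_congr
    filter_upwards [hZae] with ω h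
    show (Z ω < c) = (Z' ω < c)
    rw [h]
  have hPle : ∀ c : ℝ, P {ω | Z ω ≤ c} = P {ω | Z' ω ≤ c} := by
    intro c
    apply measure_congr
    filter_upwards [hZae] with ω h
    show (Z ω ≤ c) = (Z' ω ≤ c)
    rw [h]
  -- separation of H
  set g : Fin N → ℝ → ℝ :=
    fun i u => ∫ ω, (u + (1/τ i) * min (Z' ω - u) 0) ∂P with hg_def
  have hint : ∀ (i : Fin N) (u : ℝ),
      Integrable (fun ω => u + (1/τ i) * min (Z' ω - u) 0) P :=
    fun i u => (integrable_const u).add ((stmt11_int_min P hZ' u).const_mul _)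
  have hHsum : ∀ q : Fin N → ℝ, H q = ∑ i, w i * g i (q i) := by
    intro q
    simp only [hH]
    have e1 : (∫ ω, ∑ i, w i * (q i + (1 / τ i) * min (Z ω - q i) 0) ∂P)
        = ∫ ω, ∑ i, w i * (q i + (1 / τ i) * min (Z' ω - q i) 0) ∂P := by
      apply integral_congr_ae
      filter_upwards [hZae] with ω h
      simp only [h]
    rw [e1, integral_finset_sum _ (fun i _ => (hint i (q i)).const_mul (w i))]
    exact Finset.sum_congr rfl fun i _ => integral_const_mul _ _
  constructor
  · intro hmax i
    rw [hPlt, hPle]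
    refine (stmt11_key P hZ'm hZ' (hτ i).1 (qstar i)).1 ?_
    intro s
    have h := hmax (Function.update qstar i s)
    rw [hHsum, hHsum] at h
    rw [← Finset.add_sum_erase _ _ (Finset.mem_univ i),
      ← Finset.add_sum_erase _ (fun j => w j * g j (qstar j)) (Finset.mem_univ i)] at h
    have hsame : ∑ j ∈ Finset.univ.erase i, w j * g j (Function.update qstar i s j)
        = ∑ j ∈ Finset.univ.erase i, w j * g j (qstar j) :=
      Finset.sum_congr rfl fun j hj => by
        rw [Function.update_of_ne (Finset.ne_of_mem_erase hj)]
    rw [hsame, Function.update_self] at h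
    have := le_of_add_le_add_right h
    exact le_of_mul_le_mul_left this (hw i)
  · intro hq q
    rw [hHsum, hHsum]
    refine Finset.sum_le_sum fun i _ => ?_
    refine mul_le_mul_of_nonneg_left ?_ (hw i).le
    refine (stmt11_key P hZ'm hZ' (hτ i).1 (qstar i)).2 ?_ (q i)
    rw [← hPlt, ← hPle]
    exact hq i
end
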